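/- Let X be a compact plane set, let F be a nonempty closed subset of X, and let x ∈ F. Suppose that no bounded connected component of ℂ \ F is contained in X, and that there exists a non-trivial representing measure μ for x with respect to R(X) whose closed support is contained in F. Then μ (regarded as a measure on F) is also a non-trivial representing measure for x与 respect to R(F), and R(F) ≠ C(F). -/

import Mathlib

open Metric MeasureTheory Set

noncomputable section

/-- Membership in the uniform algebra `R(X)`: `f` is continuous on `X` and is a uniform
limit on `X` of rational functions with no poles on `X`. -/
def RMem (X : Set ℂ) (f : ℂ → ℂ) : Prop :=
  ContinuousOn f X ∧ ∀ ε : ℝ, 0 < ε → ∃ p q : Polynomial ℂ,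
    (∀ z ∈ X, q.eval z ≠ 0) ∧ ∀ z ∈ X, ‖f z - p.eval z / q.eval z‖ < ε

/-- The ideal `M_x` of functions in `R(X)` vanishing at `x`. -/
def Mideal (X : Set ℂ) (x : ℂ) : Set (ℂ → ℂ) := {f | RMem X f ∧ f x = 0}

/-- The ideal `J_x` of functions in `R(X)` vanishing on a neighbourhood of `x` in `X`. -/
def Jideal (X : Set ℂ) (x : ℂ) : Set (ℂ → ℂ) :=
  {f | RMem X f ∧ ∃ U : Set ℂ, IsOpen U ∧ x ∈ U ∧ ∀ z ∈ X ∩ U, f z = 0}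

/-- `x` is a point of continuity for `R(X)`: for every `y ∈ X \ {x}`, `J_y ⊄ M_x`. -/
def PointOfContinuity (X : Set ℂ) (x : ℂ) : Prop :=
  ∀ y ∈ X, y ≠ x → ¬ (Jideal X y ⊆ Mideal X x)

/-- `x` is an R-point for `R(X)`: for every `y ∈ X \ {x}`, `J_x ⊄ M_y`. -/
def RPoint (X : Set ℂ) (x : ℂ) : Prop :=
  ∀ y ∈ X, y ≠ x → ¬ (Jideal X x ⊆ Mideal X y)

/-- A representing measure for `x` with respect to `R(X)`: a regular Borel probability
measure supported on `X` such that `f(x) = ∫ f dμ` for all `f ∈ R(X)`. -/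
def RepMeasure (X : Set ℂ) (x : ℂ) (μ : Measure ℂ) : Prop :=
  IsProbabilityMeasure μ ∧ μ.Regular ∧ μ Xᶜ = 0 ∧
    ∀ f : ℂ → ℂ, RMem X f → f x = ∫ z, f z ∂μ

/-- A Jensen measure for `x` with respect to `R(X)`: a representing measure satisfying
`log|f(x)| ≤ ∫ log|f| dμ` for all `f ∈ R(X)` (with `log 0 = -∞`).  When `f(x) = 0` the
inequality is vacuous; when `f(x) ≠ 0` the extended-real inequality is encoded by the
equivalent family of truncated inequalities with integrands `max (log|f|) c`, `c ∈ ℝ`. -/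
def JensenMeasure (X : Set ℂ) (x : ℂ) (μ : Measure ℂ) : Prop :=
  RepMeasure X x μ ∧ ∀ f : ℂ → ℂ, RMem X f → f x ≠ 0 →
    ∀ c : ℝ, Real.log ‖f x‖ ≤ ∫ z, max (Real.log ‖f z‖) c ∂μ

/-- The closed support of a measure on `ℂ`: the set of points all of whose open
neighbourhoods have nonzero measure. -/
def measSupportC (μ : Measure ℂ) : Set ℂ :=
  {y | ∀ U : Set ℂ, IsOpen U → y ∈ U → μ U ≠ 0}

section AuxLemmas

open Polynomial BoundedContinuousFunction

lemma aux_integrable (μ : Measure ℂ) [IsProbabilityMeasure μ] (f : ℂ → ℂ)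
    (hm : AEStronglyMeasurable f μ) (C : ℝ)
    (F : Set ℂ) (hμF : μ Fᶜ = 0) (hb : ∀ z ∈ F, ‖f z‖ ≤ C) : Integrable f μ := by
  refine (integrable_const C).mono' hm ?_
  filter_upwards [(MeasureTheory.ae_iff).2 (by exact hμF)] with z hz using hb z hz

lemma aux_phi_diff (F : Set ℂ) (hFcl : IsClosed F) (hFne : F.Nonempty)
    (μ : Measure ℂ) [IsProbabilityMeasure μ] (hμF : μ Fᶜ = 0)
    (k : ℕ) (a₀ : ℂ) (ha₀ : a₀ ∉ F) :
    DifferentiableAt ℂ (fun a => ∫ z, ((z - a)^(k+1))⁻¹ ∂μ) a₀ := by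
  have hd : 0 < infDist a₀ F := (hFcl.notMem_iff_infDist_pos hFne).mp ha₀
  set ε := infDist a₀ F / 2 with hε
  have hεpos : 0 < ε := by positivity
  have hmemF : ∀ᵐ z ∂μ, z ∈ F := (MeasureTheory.ae_iff).2 (by exact hμF)
  have hdist : ∀ z ∈ F, ∀ n ∈ ball a₀ ε, ε ≤ ‖z - n‖ := by
    intro z hz n hn
    have h1 : infDist a₀ F ≤ dist a₀ z := Metric.infDist_le_dist_of_mem hz
    have h2 : dist n a₀ < ε := mem_ball.mp hn
    have : dist a₀ z ≤ dist a₀ n + dist n z := dist_triangle _ _ _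
    have hzn : dist n z = ‖z - n‖ := by rw [dist_comm, dist_eq_norm]
    rw [dist_comm] at h2
    linarith [dist_nonneg (x := a₀) (y := n)]
  have key := hasDerivAt_integral_of_dominated_loc_of_deriv_le (μ := μ)
      (F := fun n z => ((z - n)^(k+1))⁻¹) (F' := fun n z => ((k:ℂ)+1) * ((z - n)^(k+2))⁻¹)
      (x₀ := a₀) (bound := fun _ => ((k:ℝ)+1) * (ε^(k+2))⁻¹) (ball_mem_nhds a₀ hεpos)
      (Filter.Eventually.of_forall fun n =>
        (((measurable_id.sub_const n).pow_const (k+1)).inv.aestronglyMeasurable))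
      ?_ (((measurable_id.sub_const a₀).pow_const (k+2)).inv.const_mul _).aestronglyMeasurable
      ?_ (integrable_const _) ?_
  · exact key.2.differentiableAt
  · refine aux_integrable μ _ (((measurable_id.sub_const a₀).pow_const (k+1)).inv.aestronglyMeasurable)
      ((ε^(k+1))⁻¹) F hμF ?_
    intro z hz
    have h1 : ε ≤ ‖z - a₀‖ := hdist z hz a₀ (mem_ball_self hεpos)
    rw [norm_inv, norm_pow]
    exact inv_anti₀ (by positivity) (pow_le_pow_left₀ hεpos.le h1 _)
  · filter_upwards [hmemF] with z hz
    intro n hn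
    have h1 : ε ≤ ‖z - n‖ := hdist z hz n hn
    rw [norm_mul, norm_inv, norm_pow]
    have : ‖(k:ℂ)+1‖ = (k:ℝ)+1 := by
      rw [show ((k:ℂ)+1) = ((k+1 : ℕ) : ℂ) by push_cast; ring]
      rw [Complex.norm_natCast]; push_cast; ring
    rw [this]
    have h2 : (‖z - n‖^(k+2))⁻¹ ≤ (ε^(k+2))⁻¹ :=
      inv_anti₀ (by positivity) (pow_le_pow_left₀ hεpos.le h1 _)
    have h3 : (0:ℝ) ≤ (k:ℝ)+1 := by positivity
    nlinarith [inv_nonneg.mpr (pow_nonneg (norm_nonneg (z-n)) (k+2))]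
  · filter_upwards [hmemF] with z hz
    intro n hn
    have h : z - n ≠ 0 := by
      have := hdist z hz n hn
      intro h0; rw [h0, norm_zero] at this; linarith
    have h1 : HasDerivAt (fun w : ℂ => z - w) (-1) n :=
      (hasDerivAt_id n).const_sub z |>.congr_deriv (by ring)
    have h2 : HasDerivAt (fun w : ℂ => (z - w)^(k+1)) (((k+1) : ℕ) * (z - n)^k * (-1)) n :=
      h1.pow (k+1) |>.congr_deriv (by push_cast; ring)
    have h3 := h2.inv (pow_ne_zero _ h)
    convert h3 using 1
    · rfl
    · rfl
    · field_simp
      push_cast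
      ring

lemma aux_base_pole (X : Set ℂ) (x : ℂ) (hxX : x ∈ X) (μ : Measure ℂ)
    (hrep : RepMeasure X x μ) (a : ℂ) (ha : a ∉ X) (k : ℕ) :
    ∫ z, ((z - a)^(k+1))⁻¹ ∂μ = ((x - a)^(k+1))⁻¹ := by
  have hR : RMem X (fun z => ((z - a)^(k+1))⁻¹) := by
    constructor
    · apply ContinuousOn.inv₀
      · exact ((continuous_id.sub continuous_const).pow _).continuousOn
      · intro z hz
        exact pow_ne_zero _ (sub_ne_zero.mpr (fun h => ha (h ▸ hz)))
    · intro ε hε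
      refine ⟨1, (Polynomial.X - Polynomial.C a)^(k+1), ?_, ?_⟩
      · intro z hz
        simp only [eval_pow, eval_sub, eval_X, eval_C]
        exact pow_ne_zero _ (sub_ne_zero.mpr (fun h => ha (h ▸ hz)))
      · intro z hz
        simp only [eval_pow, eval_sub, eval_X, eval_C, eval_one, one_div]
        simpa using hε
  exact (hrep.2.2.2 _ hR).symm

lemma aux_key_pole (X F : Set ℂ) (hXc : IsCompact X) (hFX : F ⊆ X) (hFcl : IsClosed F)
    (hFne : F.Nonempty) (x : ℂ) (hx : x ∈ F)
    (hcomp : ∀ z ∈ Fᶜ, Bornology.IsBounded (connectedComponentIn Fᶜ z) →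
      ¬ connectedComponentIn Fᶜ z ⊆ X)
    (μ : Measure ℂ) (hrep : RepMeasure X x μ) (hμF : μ Fᶜ = 0)
    (a : ℂ) (ha : a ∉ F) (k : ℕ) :
    ∫ z, ((z - a)^(k+1))⁻¹ ∂μ = ((x - a)^(k+1))⁻¹ := by
  haveI : IsProbabilityMeasure μ := hrep.1
  set H : ℂ → ℂ := fun b => (∫ z, ((z - b)^(k+1))⁻¹ ∂μ) - ((x - b)^(k+1))⁻¹ with hH
  have hHanal : AnalyticOnNhd ℂ H Fᶜ := by
    apply DifferentiableOn.analyticOnNhd _ hFcl.isOpen_compl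
    intro b hb
    apply DifferentiableAt.differentiableWithinAt
    apply DifferentiableAt.sub
    · exact aux_phi_diff F hFcl hFne μ hμF k b hb
    · have h1 : DifferentiableAt ℂ (fun b : ℂ => (x - b)^(k+1)) b :=
        ((differentiableAt_const x).sub differentiableAt_id).pow _
      exact h1.inv (pow_ne_zero _ (sub_ne_zero.mpr (fun hxb => hb (hxb ▸ hx))))
  have ha' : a ∈ Fᶜ := ha
  set U := connectedComponentIn Fᶜ a with hU
  have haU : a ∈ U := mem_connectedComponentIn ha'
  have hUF : U ⊆ Fᶜ := connectedComponentIn_subset _ _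
  have hUconn : IsPreconnected U := (isConnected_connectedComponentIn_iff.mpr ha').isPreconnected
  obtain ⟨b, hbU, hbX⟩ : ∃ b ∈ U, b ∉ X := by
    by_cases hbdd : Bornology.IsBounded U
    · exact not_subset.mp (hcomp a ha' hbdd)
    · obtain ⟨R, hR⟩ := hXc.isBounded.exists_norm_le
      rw [isBounded_iff_forall_norm_le] at hbdd
      push_neg at hbdd
      obtain ⟨b, hb, hbR⟩ := hbdd R
      exact ⟨b, hb, fun hmem => absurd (hR b hmem) (not_le.mpr hbR)⟩
  have hzero : ∀ c ∈ (Xᶜ ∩ Fᶜ : Set ℂ), H c = 0 := by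
    intro c hc
    have h := aux_base_pole X x (hFX hx) μ hrep c hc.1 k
    simp only [hH]
    rw [h, sub_self]
  have hev : H =ᶠ[nhds b] 0 :=
    Filter.eventuallyEq_of_mem
      ((hXc.isClosed.isOpen_compl.inter hFcl.isOpen_compl).mem_nhds ⟨hbX, hUF hbU⟩) hzero
  have h0 := (hHanal.mono hUF).eqOn_zero_of_preconnected_of_eventuallyEq_zero hUconn hbU hev haU
  have : H a = 0 := by simpa using h0
  exact sub_eq_zero.mp this


lemma aux_key_rational (X F : Set ℂ) (hXc : IsCompact X) (hFX : F ⊆ X) (hFcl : IsClosed F)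
    (hFne : F.Nonempty) (x : ℂ) (hx : x ∈ F)
    (hcomp : ∀ z ∈ Fᶜ, Bornology.IsBounded (connectedComponentIn Fᶜ z) →
      ¬ connectedComponentIn Fᶜ z ⊆ X)
    (μ : Measure ℂ) (hrep : RepMeasure X x μ) (hμF : μ Fᶜ = 0) :
    ∀ n : ℕ, ∀ q : Polynomial ℂ, q.natDegree ≤ n → (∀ z ∈ F, q.eval z ≠ 0) →
      ∀ p : Polynomial ℂ, ∫ z, p.eval z / q.eval z ∂μ = p.eval x / q.eval x := by
  haveI : IsProbabilityMeasure μ := hrep.1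
  have hmemF : ∀ᵐ z ∂μ, z ∈ F := (MeasureTheory.ae_iff).2 (by exact hμF)
  intro n
  induction n with
  | zero =>
    intro q hdeg hqF p
    obtain ⟨c, rfl⟩ := Polynomial.natDegree_eq_zero.mp (le_antisymm hdeg (Nat.zero_le _))
    have hc : c ≠ 0 := by
      have h := hqF hFne.choose hFne.choose_spec
      simpa using h
    symm
    apply hrep.2.2.2
    constructor
    · simp only [eval_C]
      exact (p.continuous.div_const c).continuousOn
    · intro ε hε
      exact ⟨p, Polynomial.C c, fun z _ => by simpa using hc, fun z _ => by simpa using hε⟩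
  | succ n ih =>
    intro q hdeg hqF p
    by_cases hdn : q.natDegree ≤ n
    · exact ih q hdn hqF p
    have hdeg' : q.natDegree = n + 1 := le_antisymm hdeg (not_le.mp hdn)
    have hq0 : q ≠ 0 := fun h => hqF hFne.choose hFne.choose_spec (by simp [h])
    obtain ⟨a, haroot⟩ := Complex.exists_root (f := q)
      (by rw [degree_eq_natDegree hq0, hdeg']; exact_mod_cast Nat.succ_pos n)
    have haF : a ∉ F := fun h => hqF a h haroot
    set k := rootMultiplicity a q with hk
    have hkpos : 0 < k := (rootMultiplicity_pos hq0).mpr haroot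
    obtain ⟨m, hm⟩ : ∃ m, k = m + 1 := ⟨k - 1, (Nat.succ_pred_eq_of_pos hkpos).symm⟩
    set q₂ := q /ₘ (Polynomial.X - Polynomial.C a) ^ k with hq₂
    have hfact : (Polynomial.X - Polynomial.C a) ^ k * q₂ = q :=
      pow_mul_divByMonic_rootMultiplicity_eq q a
    have hq₂a : q₂.eval a ≠ 0 := eval_divByMonic_pow_rootMultiplicity_ne_zero a hq0
    have hq₂0 : q₂ ≠ 0 := fun h => hq₂a (by simp [h])
    set A := p.eval a / q₂.eval a with hA
    have hroot2 : (p - Polynomial.C A * q₂).IsRoot a := by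
      simp only [IsRoot, eval_sub, eval_mul, eval_C]
      rw [hA, div_mul_cancel₀ _ hq₂a, sub_self]
    obtain ⟨p₂, hp₂⟩ := dvd_iff_isRoot.mpr hroot2
    set q' := (Polynomial.X - Polynomial.C a) ^ m * q₂ with hq'
    have hzF : ∀ z ∈ F, z - a ≠ 0 ∧ q₂.eval z ≠ 0 := by
      intro z hz
      have h1 : z - a ≠ 0 := sub_ne_zero.mpr (fun h => haF (h ▸ hz))
      have h2 : q.eval z ≠ 0 := hqF z hz
      rw [← hfact] at h2
      simp only [eval_mul, eval_pow, eval_sub, eval_X, eval_C] at h2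
      exact ⟨h1, right_ne_zero_of_mul h2⟩
    have hq'F : ∀ z ∈ F, q'.eval z ≠ 0 := by
      intro z hz
      obtain ⟨h1, h2⟩ := hzF z hz
      simp only [hq', eval_mul, eval_pow, eval_sub, eval_X, eval_C]
      exact mul_ne_zero (pow_ne_zero _ h1) h2
    have hdq : k + q₂.natDegree = n + 1 := by
      have h1 : ((Polynomial.X - Polynomial.C a)^k * q₂).natDegree = k + q₂.natDegree := by
        rw [natDegree_mul (pow_ne_zero _ (X_sub_C_ne_zero a)) hq₂0, natDegree_pow,
          natDegree_X_sub_C, mul_one]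
      rw [hfact, hdeg'] at h1
      omega
    have hq'deg : q'.natDegree ≤ n := by
      have h1 : q'.natDegree = m + q₂.natDegree := by
        rw [hq', natDegree_mul (pow_ne_zero _ (X_sub_C_ne_zero a)) hq₂0, natDegree_pow,
          natDegree_X_sub_C, mul_one]
      omega
    have hpoint : ∀ z ∈ F,
        p.eval z / q.eval z = A * ((z - a)^(m+1))⁻¹ + p₂.eval z / q'.eval z := by
      intro z hz
      obtain ⟨h1, h2⟩ := hzF z hz
      have hqz : q.eval z = (z - a)^(m+1) * q₂.eval z := by
        rw [← hfact, hm]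
        simp [eval_mul, eval_pow]
      have hq'z : q'.eval z = (z - a)^m * q₂.eval z := by
        simp [hq', eval_mul, eval_pow]
      have hpz : p.eval z = A * q₂.eval z + (z - a) * p₂.eval z := by
        have h := congrArg (eval z) hp₂
        simp only [eval_sub, eval_mul, eval_C, eval_X] at h
        linear_combination h
      have h3 : (z - a)^(m+1) ≠ 0 := pow_ne_zero _ h1
      have h4 : (z - a)^m ≠ 0 := pow_ne_zero _ h1
      rw [hqz, hq'z, hpz]
      field_simp
      ring
    have hd : 0 < infDist a F := (hFcl.notMem_iff_infDist_pos hFne).mp haF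
    have hint1 : Integrable (fun z => ((z - a)^(m+1))⁻¹) μ := by
      refine aux_integrable μ _
        (((measurable_id.sub_const a).pow_const (m+1)).inv.aestronglyMeasurable)
        ((infDist a F ^ (m+1))⁻¹) F hμF ?_
      intro z hz
      rw [norm_inv, norm_pow]
      have h1 : infDist a F ≤ ‖z - a‖ := by
        have h := Metric.infDist_le_dist_of_mem (x := a) hz
        rwa [dist_eq_norm, norm_sub_rev] at h
      exact inv_anti₀ (by positivity) (pow_le_pow_left₀ hd.le h1 _)
    have hint1' : Integrable (fun z => A * ((z - a)^(m+1))⁻¹) μ := hint1.const_mul A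
    have hFcomp : IsCompact F := hXc.of_isClosed_subset hFcl hFX
    have hcont2 : ContinuousOn (fun z => p₂.eval z / q'.eval z) F :=
      ContinuousOn.div p₂.continuous.continuousOn q'.continuous.continuousOn hq'F
    obtain ⟨C, hC⟩ := hFcomp.exists_bound_of_continuousOn hcont2
    have hint2 : Integrable (fun z => p₂.eval z / q'.eval z) μ :=
      aux_integrable μ _
        (p₂.continuous.measurable.div q'.continuous.measurable).aestronglyMeasurable C F hμF hC
    calc ∫ z, p.eval z / q.eval z ∂μ
        = ∫ z, (A * ((z - a)^(m+1))⁻¹ + p₂.eval z / q'.eval z) ∂μ :=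
          integral_congr_ae (by filter_upwards [hmemF] with z hz using hpoint z hz)
      _ = A * (∫ z, ((z - a)^(m+1))⁻¹ ∂μ) + ∫ z, p₂.eval z / q'.eval z ∂μ := by
          rw [integral_add hint1' hint2, integral_const_mul]
      _ = A * ((x - a)^(m+1))⁻¹ + p₂.eval x / q'.eval x := by
          rw [aux_key_pole X F hXc hFX hFcl hFne x hx hcomp μ hrep hμF a haF m,
            ih q' hq'deg hq'F p₂]
      _ = p.eval x / q.eval x := (hpoint x hx).symm

lemma aux_repF (X F : Set ℂ) (hXc : IsCompact X) (hFX : F ⊆ X) (hFcl : IsClosed F)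
    (hFne : F.Nonempty) (x : ℂ) (hx : x ∈ F)
    (hcomp : ∀ z ∈ Fᶜ, Bornology.IsBounded (connectedComponentIn Fᶜ z) →
      ¬ connectedComponentIn Fᶜ z ⊆ X)
    (μ : Measure ℂ) (hrep : RepMeasure X x μ) (hμF : μ Fᶜ = 0) :
    ∀ f : ℂ → ℂ, RMem F f → f x = ∫ z, f z ∂μ := by
  haveI : IsProbabilityMeasure μ := hrep.1
  have hmemF : ∀ᵐ z ∂μ, z ∈ F := (MeasureTheory.ae_iff).2 (by exact hμF)
  intro f hf
  have hFcomp : IsCompact F := hXc.of_isClosed_subset hFcl hFX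
  have hmeas : AEStronglyMeasurable f μ := by
    have h : μ.restrict F = μ := Measure.restrict_eq_self_of_ae_mem hmemF
    rw [← h]
    exact ContinuousOn.aestronglyMeasurable hf.1 hFcl.measurableSet
  obtain ⟨C, hC⟩ := hFcomp.exists_bound_of_continuousOn hf.1
  have hfint : Integrable f μ := aux_integrable μ f hmeas C F hμF hC
  have key : ∀ ε : ℝ, 0 < ε → ‖f x - ∫ z, f z ∂μ‖ ≤ 2 * ε := by
    intro ε hε
    obtain ⟨p, q, hq, happ⟩ := hf.2 ε hε
    set g : ℂ → ℂ := fun z => p.eval z / q.eval z with hg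
    have hgmeas : AEStronglyMeasurable g μ :=
      (p.continuous.measurable.div q.continuous.measurable).aestronglyMeasurable
    have hgbdd : ∀ z ∈ F, ‖g z‖ ≤ C + ε := by
      intro z hz
      have h1 : ‖f z - g z‖ < ε := happ z hz
      have h2 : ‖g z‖ ≤ ‖f z‖ + ‖f z - g z‖ := by
        have h3 := norm_sub_le (f z) (f z - g z)
        simpa [sub_sub_cancel] using h3
      calc ‖g z‖ ≤ ‖f z‖ + ‖f z - g z‖ := h2
        _ ≤ C + ε := add_le_add (hC z hz) h1.le
    have hgint : Integrable g μ := aux_integrable μ g hgmeas (C + ε) F hμF hgbdd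
    have hgx : ∫ z, g z ∂μ = g x :=
      aux_key_rational X F hXc hFX hFcl hFne x hx hcomp μ hrep hμF q.natDegree q le_rfl hq p
    have h1 : ‖f x - g x‖ ≤ ε := by
      exact (happ x hx).le
    have hsub : ∀ᵐ z ∂μ, ‖g z - f z‖ ≤ ε := by
      filter_upwards [hmemF] with z hz
      rw [norm_sub_rev]
      exact (happ z hz).le
    have h2 : ‖∫ z, (g z - f z) ∂μ‖ ≤ ε := by
      calc ‖∫ z, (g z - f z) ∂μ‖ ≤ ∫ z, ‖g z - f z‖ ∂μ := norm_integral_le_integral_norm _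
        _ ≤ ∫ _z, ε ∂μ := integral_mono_ae ((hgint.sub hfint).norm) (integrable_const ε) hsub
        _ = ε := by simp
    have heq : f x - ∫ z, f z ∂μ = (f x - g x) + ∫ z, (g z - f z) ∂μ := by
      rw [integral_sub hgint hfint, hgx]
      ring
    rw [heq]
    calc ‖(f x - g x) + ∫ z, (g z - f z) ∂μ‖
        ≤ ‖f x - g x‖ + ‖∫ z, (g z - f z) ∂μ‖ := norm_add_le _ _
      _ ≤ ε + ε := add_le_add h1 h2
      _ = 2 * ε := by ring
  by_contra hne
  have hpos : 0 < ‖f x - ∫ z, f z ∂μ‖ := by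
    rw [norm_pos_iff]
    exact sub_ne_zero.mpr hne
  have h := key (‖f x - ∫ z, f z ∂μ‖ / 3) (by positivity)
  linarith

end AuxLemmas

/-- Lemma 4.1 (paper, Lemma `lemma_4_1`): let `F` be a nonempty closed subset of a
compact plane set `X` with `x ∈ F`, such that no bounded component of `ℂ \ F` is
contained in `X`.  If `x` has a non-trivial representing measure `μ` with respect to
`R(X)` whose closed support is contained in `F`, then `μ` is also a non-trivial
representing measure for `x` with respect to `R(F)`, and `R(F) ≠ C(F)`. -/
theorem representing_measure_on_subset (X : Set ℂ) (hXc : IsCompact X)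
    (hXne : X.Nonempty) (F : Set ℂ) (hFX : F ⊆ X) (hFcl : IsClosed F)
    (hFne : F.Nonempty) (x : ℂ) (hx : x ∈ F)
    (hcomp : ∀ z ∈ Fᶜ, Bornology.IsBounded (connectedComponentIn Fᶜ z) →
      ¬ connectedComponentIn Fᶜ z ⊆ X)
    (μ : Measure ℂ) (hrep : RepMeasure X x μ) (hnt : μ ≠ Measure.dirac x)
    (hsupp : measSupportC μ ⊆ F) :
    RepMeasure F x μ ∧ μ ≠ Measure.dirac x ∧
      ∃ g : ℂ → ℂ, ContinuousOn g F ∧ ¬ RMem F g := by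
  haveI : IsProbabilityMeasure μ := hrep.1
  have hμF : μ Fᶜ = 0 := by
    apply measure_null_of_locally_null
    intro y hy
    have hy' : y ∉ measSupportC μ := fun h => hy (hsupp h)
    simp only [measSupportC, Set.mem_setOf_eq] at hy'
    push_neg at hy'
    obtain ⟨U, hUo, hyU, hU0⟩ := hy'
    exact ⟨U, mem_nhdsWithin_of_mem_nhds (hUo.mem_nhds hyU), hU0⟩
  have hrepF : ∀ f : ℂ → ℂ, RMem F f → f x = ∫ z, f z ∂μ :=
    aux_repF X F hXc hFX hFcl hFne x hx hcomp μ hrep hμF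
  refine ⟨⟨hrep.1, hrep.2.1, hμF, hrepF⟩, hnt, ?_⟩
  by_contra hR
  push_neg at hR
  apply hnt
  apply MeasureTheory.ext_of_forall_lintegral_eq_of_IsFiniteMeasure
  intro f
  have hgc : Continuous fun z : ℂ => ((f z : ℝ) : ℂ) := by continuity
  have hgR : RMem F (fun z : ℂ => ((f z : ℝ) : ℂ)) := hR _ hgc.continuousOn
  have hgx := hrepF _ hgR
  have hO : ∫ z, ((f z : ℝ) : ℂ) ∂μ = ((∫ z, (f z : ℝ) ∂μ : ℝ) : ℂ) := integral_ofReal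
  rw [hO] at hgx
  have hreal : (∫ z, (f z : ℝ) ∂μ) = (f x : ℝ) := by exact_mod_cast hgx.symm
  have hfint : Integrable (fun z => (f z : ℝ)) μ := by
    obtain ⟨C, hC⟩ := f.bounded
    refine (integrable_const ((f 0 : ℝ) + C)).mono'
      (Continuous.aestronglyMeasurable (by continuity)) ?_
    refine Filter.Eventually.of_forall fun z => ?_
    have hd := hC z 0
    rw [NNReal.dist_eq] at hd
    rw [Real.norm_eq_abs, abs_of_nonneg (f z).coe_nonneg]
    have h2 := abs_le.mp hd
    linarith [h2.1, h2.2]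
  rw [lintegral_coe_eq_integral f hfint, hreal, lintegral_dirac]
  simp [ENNReal.ofReal_coe_nnreal]


end
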